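/- (Gallai–Milgram for undirected graphs) Every undirected graph G admits a path partition into at most α(G) vertex-disjoint paths, where α(G) is the independence number. Hence π_c(G) ≤ π_p(G) ≤ α(G). -/

import Mathlib

open SimpleGraph

variable {V : Type*}

/-- A walk is an induced path: it is a path and every adjacency between its
vertices is an edge of the walk. -/
def IsInducedWalk (G : SimpleGraph V) {u v : V} (p : G.Walk u v) : Prop :=
  p.IsPath ∧ ∀ a ∈ p.support, ∀ b ∈ p.support, G.Adj a b → s(a, b) ∈ p.edges

/-- A walk is an isometric (shortest) path between its endpoints. -/
def IsIsometricWalk (G : SimpleGraph V) {u v : V} (p : G.Walk u v) : Prop :=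
  p.IsPath ∧ p.length = G.dist u v

/-- A family of walks is a path cover: each walk is a path and every
vertex lies on at least one of the walks. -/
def IsPathCover (G : SimpleGraph V) {n : ℕ}
    (P : Fin n → Σ u : V, Σ v : V, G.Walk u v) : Prop :=
  (∀ i, (P i).2.2.IsPath) ∧ ∀ x : V, ∃ i, x ∈ (P i).2.2.support

/-- A family of walks is a path partition: each walk is a path and every
vertex lies on exactly one of the walks. -/
def IsPathPartition (G : SimpleGraph V) {n : ℕ}
    (P : Fin n → Σ u : V, Σ v : V, G.Walk u v) : Prop :=
  (∀ i, (P i).2.2.IsPath) ∧ ∀ x : V, ∃! i, x ∈ (P i).2.2.support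

/-- π_c : the path cover number. -/
noncomputable def pathCoverNum (G : SimpleGraph V) : ℕ :=
  sInf {n | ∃ P : Fin n → Σ u : V, Σ v : V, G.Walk u v, IsPathCover G P}

/-- ρ_c : the induced path cover number. -/
noncomputable def inducedPathCoverNum (G : SimpleGraph V) : ℕ :=
  sInf {n | ∃ P : Fin n → Σ u : V, Σ v : V, G.Walk u v,
    IsPathCover G P ∧ ∀ i, IsInducedWalk G (P i).2.2}

/-- ip_c : the isometric path cover number. -/
noncomputable def isometricPathCoverNum (G : SimpleGraph V) : ℕ :=
  sInf {n | ∃ P : Fin n → Σ u : V, Σ v : V, G.Walk u v,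
    IsPathCover G P ∧ ∀ i, IsIsometricWalk G (P i).2.2}

/-- π_p : the path partition number. -/
noncomputable def pathPartitionNum (G : SimpleGraph V) : ℕ :=
  sInf {n | ∃ P : Fin n → Σ u : V, Σ v : V, G.Walk u v, IsPathPartition G P}

/-- ρ_p : the induced path partition number. -/
noncomputable def inducedPathPartitionNum (G : SimpleGraph V) : ℕ :=
  sInf {n | ∃ P : Fin n → Σ u : V, Σ v : V, G.Walk u v,
    IsPathPartition G P ∧ ∀ i, IsInducedWalk G (P i).2.2}

/-- ip_p : the isometric path partition number. -/
noncomputable def isometricPathPartitionNum (G : SimpleGraph V) : ℕ :=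
  sInf {n | ∃ P : Fin n → Σ u : V, Σ v : V, G.Walk u v,
    IsPathPartition G P ∧ ∀ i, IsIsometricWalk G (P i).2.2}

/-- α : the independence number. -/
noncomputable def indepNumber (G : SimpleGraph V) : ℕ :=
  sSup {n | ∃ s : Finset V, (∀ a ∈ s, ∀ b ∈ s, ¬ G.Adj a b) ∧ s.card = n}

lemma aux_trivial_partition [Fintype V] (G : SimpleGraph V) :
    ∃ P : Fin (Fintype.card V) → Σ u : V, Σ v : V, G.Walk u v, IsPathPartition G P := by
  classical
  let e := (Fintype.equivFin V).symm
  refine ⟨fun i => ⟨e i, e i, Walk.nil⟩, fun i => Walk.IsPath.nil, fun x => ?_⟩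
  refine ⟨e.symm x, by simp, fun y hy => ?_⟩
  simp only [Walk.support_nil, List.mem_singleton] at hy
  subst hy; simp

lemma aux_merge {G : SimpleGraph V} {k : ℕ}
    {P : Fin k → Σ u : V, Σ v : V, G.Walk u v} (hP : IsPathPartition G P)
    {i j : Fin k} (hij : i ≠ j) (h : G.Adj (P i).1 (P j).1) :
    ∃ Q : Fin (k-1) → Σ u : V, Σ v : V, G.Walk u v, IsPathPartition G Q := by
  classical
  -- disjointness of supports
  have hdisj : ∀ x, x ∈ (P i).2.2.support → x ∈ (P j).2.2.support → False := by
    intro x hxi hxj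
    obtain ⟨c, -, hc⟩ := hP.2 x
    exact hij ((hc i hxi).trans (hc j hxj).symm)
  -- the merged walk
  set W : G.Walk (P i).2.1 (P j).2.1 :=
    (P i).2.2.reverse.append (Walk.cons h (P j).2.2) with hW
  have hWsupp : ∀ x, x ∈ W.support ↔
      x ∈ (P i).2.2.support ∨ x ∈ (P j).2.2.support := by
    intro x
    simp [hW, Walk.support_append, Walk.support_reverse, List.mem_append]
  have hWpath : W.IsPath := by
    rw [Walk.isPath_def, hW, Walk.support_append, List.nodup_append]
    refine ⟨by simpa [Walk.support_reverse] using (hP.1 i).support_nodup, ?_, ?_⟩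
    · simpa using ((hP.1 j).support_nodup)
    · intro x hx y hx' hxy
      simp only [Walk.support_reverse, List.mem_reverse] at hx
      simp only [Walk.support_cons, List.tail_cons] at hx'
      subst hxy
      exact hdisj x hx hx'
  -- reindexing
  have hcard : Fintype.card {m : Fin k // m ≠ j} = k - 1 := by
    simp [Fintype.card_subtype_compl]
  let e : Fin (k-1) ≃ {m : Fin k // m ≠ j} := (Fintype.equivFinOfCardEq hcard).symm
  refine ⟨fun m => if (e m : Fin k) = i then ⟨_, _, W⟩ else P (e m), ?_, ?_⟩
  · intro m
    dsimp only
    by_cases hm : (e m : Fin k) = i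
    · rw [if_pos hm]; exact hWpath
    · rw [if_neg hm]; exact hP.1 _
  · intro x
    obtain ⟨i₀, hx, hu⟩ := hP.2 x
    have hmem : ∀ m : Fin (k-1), x ∈ (if (e m : Fin k) = i then
        (⟨_, _, W⟩ : Σ u : V, Σ v : V, G.Walk u v) else P (e m)).2.2.support ↔
        (if (e m : Fin k) = i then x ∈ (P i).2.2.support ∨ x ∈ (P j).2.2.support
          else x ∈ (P (e m)).2.2.support) := by
      intro m
      by_cases hm : (e m : Fin k) = i
      · rw [if_pos hm, if_pos hm]; exact hWsupp x
      · rw [if_neg hm, if_neg hm]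
    set i₁ : Fin k := if i₀ = j then i else i₀ with hi₁
    have hi₁j : i₁ ≠ j := by
      rcases eq_or_ne i₀ j with h0 | h0 <;> simp [hi₁, h0, hij]
    refine ⟨e.symm ⟨i₁, hi₁j⟩, (hmem _).mpr ?_, ?_⟩
    · have he : (e (e.symm ⟨i₁, hi₁j⟩) : Fin k) = i₁ := by rw [Equiv.apply_symm_apply]
      rcases eq_or_ne i₀ j with h0 | h0
      · have hi : i₁ = i := by rw [hi₁, if_pos h0]
        rw [he, hi, if_pos rfl]
        exact Or.inr (h0 ▸ hx)
      · have hi : i₁ = i₀ := by rw [hi₁, if_neg h0]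
        by_cases hii : i₀ = i
        · rw [he, hi, if_pos hii]
          exact Or.inl (hii ▸ hx)
        · rw [he, hi, if_neg hii]
          exact hx
    · intro m hm
      rw [hmem] at hm
      have key : (e m : Fin k) = i₁ := by
        by_cases hmi : (e m : Fin k) = i
        · rw [if_pos hmi] at hm
          rcases hm with hm | hm
          · have h1 : i = i₀ := hu i hm
            have h0 : i₀ ≠ j := by rw [← h1]; exact hij
            rw [hmi, hi₁, if_neg h0]; exact h1
          · have h1 : j = i₀ := hu j hm
            rw [hmi, hi₁, if_pos h1.symm]
        · rw [if_neg hmi] at hm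
          have h1 : (e m : Fin k) = i₀ := hu _ hm
          have h0 : i₀ ≠ j := fun hh => (e m).2 (h1.trans hh)
          rw [hi₁, if_neg h0]; exact h1
      have : e m = ⟨i₁, hi₁j⟩ := Subtype.ext key
      rw [← this, Equiv.symm_apply_apply]

theorem stmt_3' {V : Type*} [Fintype V] (G : SimpleGraph V) :
    (∃ n : ℕ, n ≤ sSup {n | ∃ s : Finset V, (∀ a ∈ s, ∀ b ∈ s, ¬ G.Adj a b) ∧ s.card = n} ∧
      ∃ P : Fin n → Σ u : V, Σ v : V, G.Walk u v, IsPathPartition G P) ∧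
    sInf {n | ∃ P : Fin n → Σ u : V, Σ v : V, G.Walk u v,
        (∀ i, (P i).2.2.IsPath) ∧ ∀ x : V, ∃ i, x ∈ (P i).2.2.support} ≤
      sInf {n | ∃ P : Fin n → Σ u : V, Σ v : V, G.Walk u v, IsPathPartition G P} ∧
    sInf {n | ∃ P : Fin n → Σ u : V, Σ v : V, G.Walk u v, IsPathPartition G P} ≤
      sSup {n | ∃ s : Finset V, (∀ a ∈ s, ∀ b ∈ s, ¬ G.Adj a b) ∧ s.card = n} := by
  classical
  set S := {n | ∃ P : Fin n → Σ u : V, Σ v : V, G.Walk u v, IsPathPartition G P} with hSdef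
  have hSne : S.Nonempty := ⟨Fintype.card V, aux_trivial_partition G⟩
  set k := sInf S with hk
  obtain ⟨P, hP⟩ : ∃ P : Fin k → Σ u : V, Σ v : V, G.Walk u v, IsPathPartition G P :=
    Nat.sInf_mem hSne
  have hinj : Function.Injective (fun i : Fin k => (P i).1) := by
    intro a b hab
    obtain ⟨c, -, hc⟩ := hP.2 (P a).1
    refine (hc a (Walk.start_mem_support _)).trans (hc b ?_).symm
    simp only at hab
    rw [hab]; exact Walk.start_mem_support _
  set s : Finset V := Finset.image (fun i : Fin k => (P i).1) Finset.univ with hs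
  have hcard : s.card = k := by
    rw [hs, Finset.card_image_of_injective _ hinj, Finset.card_fin]
  have hindep : ∀ a ∈ s, ∀ b ∈ s, ¬ G.Adj a b := by
    intro a ha b hb hadj
    rw [hs, Finset.mem_image] at ha hb
    obtain ⟨i, -, rfl⟩ := ha
    obtain ⟨j, -, rfl⟩ := hb
    have hij : i ≠ j := by rintro rfl; exact G.irrefl hadj
    obtain ⟨Q, hQ⟩ := aux_merge hP hij hadj
    have hle : sInf S ≤ k - 1 := Nat.sInf_le ⟨Q, hQ⟩
    have hkpos : 1 ≤ k := i.pos
    omega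
  have hbdd : BddAbove {n | ∃ s : Finset V, (∀ a ∈ s, ∀ b ∈ s, ¬ G.Adj a b) ∧ s.card = n} := by
    refine ⟨Fintype.card V, fun n hn => ?_⟩
    obtain ⟨t, -, rfl⟩ := hn
    exact Finset.card_le_univ t
  have hka : k ≤ sSup {n | ∃ s : Finset V, (∀ a ∈ s, ∀ b ∈ s, ¬ G.Adj a b) ∧ s.card = n} :=
    le_csSup hbdd ⟨s, hindep, hcard⟩
  refine ⟨⟨k, hka, P, hP⟩, ?_, hka⟩
  exact Nat.sInf_le ⟨P, hP.1, fun x => (hP.2 x).exists⟩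

theorem stmt_3 {V : Type*} [Fintype V] (G : SimpleGraph V) :
    (∃ n : ℕ, n ≤ indepNumber G ∧
      ∃ P : Fin n → Σ u : V, Σ v : V, G.Walk u v, IsPathPartition G P) ∧
    pathCoverNum G ≤ pathPartitionNum G ∧ pathPartitionNum G ≤ indepNumber G := by
  exact stmt_3' G
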